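/- The iterates of APA† (θ^t = argmin ‖θ - θ^{t-1}‖² s.t. y_{:t} = X_{:t}ᵀθ) with θ^0 = 0 coincide for every t with the minimum-norm solution θ̂^t = argmin ‖θ‖² s.t. y_{:t} = X_{:t}ᵀθ. -/
import Mathlib


open Matrix

private lemma dp_self_nonneg {d : ℕ} (w : Fin d → ℝ) : 0 ≤ w ⬝ᵥ w :=
  Finset.sum_nonneg fun i _ => mul_self_nonneg (w i)

/-- The iterates of APA† (`θ^{t+1} = argmin ‖θ - θ^t‖²  s.t.  x_iᵀθ = y_i  ∀ i ≤ t`)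
with `θ^0 = 0`, for a consistent linear system (`y_i = x_iᵀθ*`) with linearly
independent data, coincide at every `t ≤ T` with the minimum-norm solution
`θ̂^t = argmin ‖θ‖²  s.t.  x_iᵀθ = y_i  ∀ i < t`. -/
theorem apa_dagger_is_min_norm {d T : ℕ} (x : ℕ → Fin d → ℝ) (y : ℕ → ℝ)
    (hli : LinearIndependent ℝ (fun i : Fin T => x i))
    (θstar : Fin d → ℝ) (hy : ∀ i, y i = x i ⬝ᵥ θstar)
    (θ : ℕ → Fin d → ℝ) (h0 : θ 0 = 0)
    (hfeas : ∀ t < T, ∀ i < t + 1, x i ⬝ᵥ θ (t + 1) = y i)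
    (hmin : ∀ t < T, ∀ v : Fin d → ℝ, (∀ i < t + 1, x i ⬝ᵥ v = y i) →
      (θ (t + 1) - θ t) ⬝ᵥ (θ (t + 1) - θ t) ≤ (v - θ t) ⬝ᵥ (v - θ t)) :
    ∀ t ≤ T, (∀ i < t, x i ⬝ᵥ θ t = y i) ∧
      (∀ v : Fin d → ℝ, (∀ i < t, x i ⬝ᵥ v = y i) → θ t ⬝ᵥ θ t ≤ v ⬝ᵥ v) := by
  have key : ∀ t ≤ T, (∀ i < t, x i ⬝ᵥ θ t = y i) ∧
      (∀ w : Fin d → ℝ, (∀ i < t, x i ⬝ᵥ w = 0) → θ t ⬝ᵥ w = 0) := by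
    intro t
    induction t with
    | zero =>
      intro _
      exact ⟨fun i hi => absurd hi (Nat.not_lt_zero i), fun w _ => by simp [h0]⟩
    | succ t ih =>
      intro ht
      have htT : t < T := ht
      obtain ⟨hf, horth⟩ := ih htT.le
      refine ⟨hfeas t htT, ?_⟩
      intro w hw
      set u := θ (t + 1) - θ t with hu
      have hq : ∀ c : ℝ, 0 ≤ 2 * c * (u ⬝ᵥ w) + c ^ 2 * (w ⬝ᵥ w) := by
        intro c
        have hfeasv : ∀ i < t + 1, x i ⬝ᵥ (θ (t + 1) + c • w) = y i := by
          intro i hi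
          rw [dotProduct_add, hfeas t htT i hi, dotProduct_smul, hw i hi,
            smul_zero, add_zero]
        have hle := hmin t htT _ hfeasv
        have heq : (θ (t + 1) + c • w - θ t) ⬝ᵥ (θ (t + 1) + c • w - θ t)
            = u ⬝ᵥ u + (2 * c * (u ⬝ᵥ w) + c ^ 2 * (w ⬝ᵥ w)) := by
          have h1 : θ (t + 1) + c • w - θ t = u + c • w := by
            rw [hu]; abel
          simp only [h1, add_dotProduct, dotProduct_add, smul_dotProduct,
            dotProduct_smul, dotProduct_comm w u, smul_eq_mul]
          ring
        rw [heq] at hle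
        linarith
      have hperp : u ⬝ᵥ w = 0 := by
        set a := u ⬝ᵥ w with ha
        set b := w ⬝ᵥ w with hb
        have hb0 : 0 ≤ b := dp_self_nonneg w
        rcases eq_or_lt_of_le hb0 with hbz | hbp
        · have := hq (-a)
          nlinarith
        · have hthis := hq (-a / b)
          have e : 2 * (-a / b) * a + (-a / b) ^ 2 * b = -(a ^ 2) / b := by
            field_simp; ring
          have h6 : 0 ≤ -(a ^ 2) / b := by rw [← e]; exact hthis
          have h7 : 0 ≤ -(a ^ 2) := by
            have h8 := mul_nonneg h6 hbp.le
            rwa [div_mul_cancel₀ _ (ne_of_gt hbp)] at h8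
          have h9 : a ^ 2 = 0 := le_antisymm (by linarith) (sq_nonneg a)
          exact sq_eq_zero_iff.mp h9
      have hθt : θ t ⬝ᵥ w = 0 :=
        horth w fun i hi => hw i (hi.trans (Nat.lt_succ_self t))
      have : θ (t + 1) = θ t + u := by rw [hu]; abel
      rw [this, add_dotProduct, hθt, hperp, add_zero]
  intro t ht
  obtain ⟨hf, horth⟩ := key t ht
  refine ⟨hf, ?_⟩
  intro v hv
  set w := v - θ t with hw
  have hw0 : ∀ i < t, x i ⬝ᵥ w = 0 := by
    intro i hi
    rw [hw, dotProduct_sub, hf i hi, hv i hi, sub_self]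
  have hθw : θ t ⬝ᵥ w = 0 := horth w hw0
  have hv' : v = θ t + w := by rw [hw]; abel
  rw [hv', add_dotProduct, dotProduct_add, dotProduct_add, hθw,
    dotProduct_comm w (θ t), hθw]
  have := dp_self_nonneg w
  linarith
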